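/- Consider minimizing Σᵢ aᵢ yᵢ² − 2 bᵢ yᵢ subject to Σᵢ yᵢ² = c with c > 0. If y is a global minimizer with Lagrange multiplier λ (so that (aᵢ + λ) yᵢ = bᵢ for all i), then aᵢ + λ ≥ 0 for all i, i.e., λ ≥ −minᵢ aᵢ. -/
import Mathlib

set_option maxHeartbeats 1000000


/-- Second-order necessary condition: if `y` globally minimizes
`Σ aᵢyᵢ² - 2bᵢyᵢ` over the sphere `Σ yᵢ² = c` (`c > 0`) and satisfies the
first-order KKT condition `(aᵢ + λ) yᵢ = bᵢ` with multiplier `λ`, then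
`aᵢ + λ ≥ 0` for all `i`. -/
theorem second_order_necessary {N : ℕ} (a b : Fin N → ℝ) (c : ℝ) (hc : 0 < c)
    (y : Fin N → ℝ) (lam : ℝ)
    (hfeas : ∑ i, (y i) ^ 2 = c)
    (hopt : ∀ z : Fin N → ℝ, ∑ i, (z i) ^ 2 = c →
      ∑ i, (a i * (y i) ^ 2 - 2 * b i * y i) ≤
        ∑ i, (a i * (z i) ^ 2 - 2 * b i * z i))
    (hKKT : ∀ i, (a i + lam) * y i = b i) :
    ∀ i, 0 ≤ a i + lam := by
  have key : ∀ z : Fin N → ℝ, ∑ i, (z i) ^ 2 = c →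
      0 ≤ ∑ k, (a k + lam) * (z k - y k) ^ 2 := by
    intro z hz
    have h1 := hopt z hz
    have h2 : ∑ k, (a k + lam) * (z k - y k) ^ 2
        = ∑ k, ((a k * (z k) ^ 2 - 2 * b k * z k) - (a k * (y k) ^ 2 - 2 * b k * y k)
            + lam * (z k) ^ 2 - lam * (y k) ^ 2) := by
      refine Finset.sum_congr rfl fun k _ => ?_
      rw [← hKKT k]; ring
    rw [h2, Finset.sum_sub_distrib, Finset.sum_add_distrib, Finset.sum_sub_distrib,
      ← Finset.mul_sum, ← Finset.mul_sum, hz, hfeas]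
    linarith
  intro i
  by_contra hneg
  push_neg at hneg
  by_cases hyi : y i = 0
  · -- y i = 0 : move mass from some j with y j ≠ 0 to coordinate i
    have hj : ∃ j, y j ≠ 0 := by
      by_contra h
      push_neg at h
      have : ∑ k, (y k) ^ 2 = 0 := by
        apply Finset.sum_eq_zero
        intro k _; simp [h k]
      linarith [hfeas ▸ this]
    obtain ⟨j, hyj⟩ := hj
    have hij : i ≠ j := fun h => hyj (h ▸ hyi)
    obtain ⟨A, hA⟩ : ∃ x : ℝ, x = a i + lam := ⟨_, rfl⟩
    obtain ⟨M, hM⟩ : ∃ x : ℝ, x = |a j + lam| + 1 := ⟨_, rfl⟩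
    have hAneg : A < 0 := by rw [hA]; exact hneg
    have hM0 : 0 < M := by
      rw [hM]; positivity
    obtain ⟨u, hu0, hu1, hu2⟩ : ∃ u : ℝ, 0 < u ∧ u ≤ 1 ∧ u ≤ -A / (2 * M) := by
      refine ⟨min (1/2) (-A / (2 * M)), ?_, ?_, min_le_right _ _⟩
      · exact lt_min (by norm_num) (div_pos (by linarith) (by linarith))
      · exact le_trans (min_le_left _ _) (by norm_num)
    obtain ⟨r, hr0, hrsq⟩ : ∃ r : ℝ, 0 ≤ r ∧ r ^ 2 = 1 - u :=
      ⟨Real.sqrt (1 - u), Real.sqrt_nonneg _, Real.sq_sqrt (by linarith)⟩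
    obtain ⟨sv, hssq⟩ : ∃ s : ℝ, s ^ 2 = u := ⟨Real.sqrt u, Real.sq_sqrt hu0.le⟩
    have hrb : (r - 1) ^ 2 ≤ u ^ 2 := by
      have hrge : 1 - u ≤ r := by nlinarith [hrsq, hr0]
      nlinarith [hrsq, hrge]
    set z : Fin N → ℝ := fun k => if k = i then sv * y j else if k = j then r * y j else y k
      with hzdef
    have hzi : z i = sv * y j := by simp [hzdef]
    have hzj : z j = r * y j := by simp [hzdef, hij.symm]
    have hzk : ∀ k, k ≠ i → k ≠ j → z k = y k := by
      intro k h1 h2; simp [hzdef, h1, h2]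
    have hsplit : ∀ F : Fin N → ℝ,
        ∑ k, F k = F i + (F j + ∑ k ∈ (Finset.univ.erase i).erase j, F k) := by
      intro F
      rw [← Finset.add_sum_erase _ F (Finset.mem_univ i),
        ← Finset.add_sum_erase _ F (Finset.mem_erase.mpr ⟨hij.symm, Finset.mem_univ j⟩)]
    have hrest : ∑ k ∈ (Finset.univ.erase i).erase j, (z k) ^ 2
        = ∑ k ∈ (Finset.univ.erase i).erase j, (y k) ^ 2 := by
      refine Finset.sum_congr rfl fun k hk => ?_
      rw [Finset.mem_erase, Finset.mem_erase] at hk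
      rw [hzk k hk.2.1 hk.1]
    have hz : ∑ k, (z k) ^ 2 = c := by
      rw [hsplit (fun k => (z k) ^ 2), hrest, hzi, hzj]
      rw [hsplit (fun k => (y k) ^ 2)] at hfeas
      nlinarith [hfeas, hssq, hrsq]
    have hk := key z hz
    have hsum : ∑ k, (a k + lam) * (z k - y k) ^ 2
        = (a i + lam) * (z i - y i) ^ 2 + (a j + lam) * (z j - y j) ^ 2 := by
      rw [hsplit (fun k => (a k + lam) * (z k - y k) ^ 2)]
      have : ∑ k ∈ (Finset.univ.erase i).erase j, (a k + lam) * (z k - y k) ^ 2 = 0 := by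
        apply Finset.sum_eq_zero
        intro k hk
        rw [Finset.mem_erase, Finset.mem_erase] at hk
        rw [hzk k hk.2.1 hk.1]; ring
      rw [this]; ring
    rw [hsum, hzi, hzj, hyi, ← hA] at hk
    -- hk : 0 ≤ A * (sv*y j - 0)^2 + (a j + lam) * (r*y j - y j)^2
    have hyj2 : 0 < (y j) ^ 2 := by positivity
    have habs : a j + lam ≤ M := by
      rw [hM]; have := le_abs_self (a j + lam); linarith
    have hterm2 : (a j + lam) * (r * y j - y j) ^ 2 ≤ M * (u ^ 2 * (y j) ^ 2) := by
      have h2 : (r * y j - y j) ^ 2 ≤ u ^ 2 * (y j) ^ 2 := by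
        have h1 : (r * y j - y j) ^ 2 = (r - 1) ^ 2 * (y j) ^ 2 := by ring
        rw [h1]
        exact mul_le_mul_of_nonneg_right hrb hyj2.le
      calc (a j + lam) * (r * y j - y j) ^ 2
          ≤ M * (r * y j - y j) ^ 2 :=
            mul_le_mul_of_nonneg_right habs (sq_nonneg _)
        _ ≤ M * (u ^ 2 * (y j) ^ 2) := mul_le_mul_of_nonneg_left h2 hM0.le
    have hterm1 : A * (sv * y j - 0) ^ 2 = A * u * (y j) ^ 2 := by
      rw [sub_zero, mul_pow, hssq]; ring
    have hMu : M * u ≤ -A / 2 := by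
      have h := (le_div_iff₀ (by positivity : (0:ℝ) < 2 * M)).mp hu2
      linarith [h]
    have h3 : 0 ≤ A * u * (y j) ^ 2 + M * (u ^ 2 * (y j) ^ 2) := by
      rw [hterm1] at hk; linarith [hk, hterm2]
    have h4 : M * (u ^ 2 * (y j) ^ 2) ≤ (-A / 2) * (u * (y j) ^ 2) := by
      calc M * (u ^ 2 * (y j) ^ 2) = (M * u) * (u * (y j) ^ 2) := by ring
        _ ≤ (-A / 2) * (u * (y j) ^ 2) :=
            mul_le_mul_of_nonneg_right hMu (le_of_lt (mul_pos hu0 hyj2))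
    have h5 : (A / 2) * (u * (y j) ^ 2) < 0 :=
      mul_neg_of_neg_of_pos (by linarith) (mul_pos hu0 hyj2)
    linarith [h3, h4, h5]
  · -- y i ≠ 0 : reflect coordinate i
    set z : Fin N → ℝ := Function.update y i (-(y i)) with hzdef
    have hz : ∑ k, (z k) ^ 2 = c := by
      rw [← hfeas]
      refine Finset.sum_congr rfl fun k _ => ?_
      rcases eq_or_ne k i with rfl | h
      · simp [hzdef]
      · simp [hzdef, Function.update_of_ne h]
    have hk := key z hz
    have hsum : ∑ k, (a k + lam) * (z k - y k) ^ 2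
        = (a i + lam) * (z i - y i) ^ 2 := by
      apply Finset.sum_eq_single
      · intro k _ hki
        rw [hzdef, Function.update_of_ne hki]; ring
      · intro h; exact absurd (Finset.mem_univ i) h
    have hzi : z i = -(y i) := by simp [hzdef]
    rw [hsum, hzi] at hk
    have : (0:ℝ) < (y i) ^ 2 := by positivity
    nlinarith [hk, this, hneg]
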